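/- Let G be a finite cyclic group of order d acting on ℤ/nℤ (n = d·m, m = d·e) by multiplication by (1+km). If d is odd or k is even or 4 ∣ m, then the even-degree Tate cohomology ker(T_k)/im(N_k) and odd-degree Tate cohomology ker(N_k)/im(T_k) are both cyclic of order gcd(d,k). -/

import Mathlib

lemma aux_range_mulLeft (n : ℕ) (a : ZMod n) :
    (AddMonoidHom.mulLeft a).range = AddSubgroup.zmultiples a := by
  ext x
  constructor
  · rintro ⟨y, rfl⟩
    obtain ⟨c, rfl⟩ := ZMod.intCast_surjective y
    exact ⟨c, by simp [zsmul_eq_mul, mul_comm]⟩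
  · rintro ⟨c, rfl⟩
    exact ⟨(c : ZMod n), by simp [zsmul_eq_mul, mul_comm]⟩

lemma aux_addOrderOf_intCast (n : ℕ) (hn : n ≠ 0) (a : ℤ) :
    addOrderOf ((a : ℤ) : ZMod n) = n / Int.gcd a n := by
  have h1 : Int.gcd a n = Nat.gcd n a.natAbs := by
    rw [Int.gcd]; simp [Nat.gcd_comm]
  have h2 : addOrderOf ((a : ℤ) : ZMod n) = addOrderOf ((a.natAbs : ℕ) : ZMod n) := by
    rcases Int.natAbs_eq a with h2 | h2
    · conv_lhs => rw [h2]
      rw [Int.cast_natCast]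
    · conv_lhs => rw [h2]
      rw [Int.cast_neg, Int.cast_natCast, addOrderOf_neg]
  rw [h2, ZMod.addOrderOf_coe _ hn, h1]

lemma aux_card_range (n : ℕ) (hn : n ≠ 0) (a : ℤ) :
    Nat.card (AddMonoidHom.mulLeft ((a : ZMod n))).range = n / Int.gcd a n := by
  rw [aux_range_mulLeft, Nat.card_zmultiples, aux_addOrderOf_intCast n hn]

lemma aux_card_ker (n : ℕ) (hn : n ≠ 0) (a : ℤ) :
    Nat.card (AddMonoidHom.mulLeft ((a : ZMod n))).ker = Int.gcd a n := by
  haveI : NeZero n := ⟨hn⟩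
  set f := AddMonoidHom.mulLeft ((a : ZMod n)) with hf
  have hdvd : Int.gcd a n ∣ n := by
    have := Int.gcd_dvd_right (a := a) (b := (n : ℤ))
    exact_mod_cast this
  have hg0 : Int.gcd a n ≠ 0 := by
    intro h0
    rw [h0] at hdvd
    exact hn (Nat.eq_zero_of_zero_dvd hdvd)
  have h2 := AddSubgroup.card_eq_card_quotient_mul_card_addSubgroup f.ker
  have h3 : Nat.card (ZMod n ⧸ f.ker) = n / Int.gcd a n := by
    rw [Nat.card_congr (QuotientAddGroup.quotientKerEquivRange f).toEquiv,
      aux_card_range n hn]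
  rw [Nat.card_zmod, h3] at h2
  have h4 : n / Int.gcd a n * Int.gcd a n = n := Nat.div_mul_cancel hdvd
  have h5 : 0 < n / Int.gcd a n := Nat.div_pos (Nat.le_of_dvd (Nat.pos_of_ne_zero hn) hdvd)
    (Nat.pos_of_ne_zero hg0)
  nlinarith [h2, h4, h5, Nat.card (f.ker)]

lemma aux_quot_equiv {n : ℕ} (hn : n ≠ 0) {H K : AddSubgroup (ZMod n)} (hle : H ≤ K) {g : ℕ}
    (hcard : Nat.card K = Nat.card H * g) :
    Nonempty ((K ⧸ H.addSubgroupOf K) ≃+ ZMod g) := by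
  haveI : NeZero n := ⟨hn⟩
  have h1 : Nat.card (H.addSubgroupOf K) = Nat.card H :=
    Nat.card_congr (AddSubgroup.addSubgroupOfEquivOfLe hle).toEquiv
  have h2 := AddSubgroup.card_eq_card_quotient_mul_card_addSubgroup (H.addSubgroupOf K)
  rw [h1, hcard, mul_comm (Nat.card H) g] at h2
  have hH : 0 < Nat.card H := Nat.card_pos
  have hq : Nat.card (K ⧸ H.addSubgroupOf K) = g :=
    Nat.eq_of_mul_eq_mul_right hH h2.symm
  haveI : IsAddCyclic (K ⧸ H.addSubgroupOf K) :=
    isAddCyclic_of_surjective (QuotientAddGroup.mk' _) (QuotientAddGroup.mk'_surjective _)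
  exact ⟨hq ▸ (zmodAddCyclicAddEquiv inferInstance).symm⟩

lemma aux_int_neg_gcd (a b : ℤ) : Int.gcd (-a) b = Int.gcd a b := by
  unfold Int.gcd; rw [Int.natAbs_neg]

theorem stmt_19 (n d e m : ℕ) (hd : 0 < d) (he : 0 < e) (hm : 0 < m)
    (hnm : n = d * m) (hme : m = d * e) (k : ℤ)
    (h : Odd d ∨ Even k ∨ 4 ∣ m)
    (T N : ZMod n →+ ZMod n)
    (hT : T = AddMonoidHom.mulLeft (-(k : ZMod n) * (m : ZMod n)))
    (hN : N = AddMonoidHom.mulLeft (((∑ i ∈ Finset.range d, (1 + (i : ℤ) * k * m)) : ℤ) : ZMod n)) :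
    Nonempty ((T.ker ⧸ N.range.addSubgroupOf T.ker) ≃+ ZMod (Int.gcd d k)) ∧
    Nonempty ((N.ker ⧸ T.range.addSubgroupOf N.ker) ≃+ ZMod (Int.gcd d k)) := by
  have hn0 : n ≠ 0 := by rw [hnm]; positivity
  have hnℤ : (n : ℤ) = (d : ℤ) * (m : ℤ) := by exact_mod_cast hnm
  have hmℤ : (m : ℤ) = (d : ℤ) * (e : ℤ) := by exact_mod_cast hme
  set g := Int.gcd (d : ℤ) k with hg
  set C : ℤ := ∑ i ∈ Finset.range d, (i : ℤ) with hCdef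
  set S : ℤ := ∑ i ∈ Finset.range d, (1 + (i : ℤ) * k * m) with hSdef
  -- Gauss sum
  have hC2 : 2 * C = (d : ℤ) * ((d : ℤ) - 1) := by
    have h' := congrArg (Nat.cast : ℕ → ℤ) (Finset.sum_range_id_mul_two d)
    push_cast [Nat.cast_sub (by omega : 1 ≤ d)] at h'
    rw [← hCdef] at h'
    linarith
  have hSsum : S = (d : ℤ) + C * (k * (m : ℤ)) := by
    rw [hSdef, Finset.sum_add_distrib, Finset.sum_const, Finset.card_range, nsmul_eq_mul,
      mul_one]
    congr 1
    rw [hCdef, Finset.sum_mul]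
    exact Finset.sum_congr rfl fun i _ => by ring
  have hSfact : S = (d : ℤ) * (1 + C * k * (e : ℤ)) := by
    rw [hSsum, hmℤ]; ring
  -- the coprimality
  have hA : Int.gcd (1 + C * k * (e : ℤ)) (m : ℤ) = 1 := by
    rw [← Int.isCoprime_iff_gcd_eq_one]
    by_cases hodd : Odd d
    · obtain ⟨t, ht⟩ := hodd
      have hdt : (d : ℤ) = 2 * (t : ℤ) + 1 := by exact_mod_cast ht
      have hCt : C = (d : ℤ) * (t : ℤ) := by
        have : 2 * C = 2 * ((d : ℤ) * (t : ℤ)) := by rw [hC2, hdt]; ring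
        linarith
      exact ⟨1, -((t : ℤ) * k), by rw [hCt, hmℤ]; ring⟩
    · by_cases hk : Even k
      · obtain ⟨j, hj⟩ := hk
        refine ⟨1, -(((d : ℤ) - 1) * j), ?_⟩
        rw [hj, hmℤ]
        linear_combination ((j : ℤ) * (e : ℤ)) * hC2
      · have hde : Even d := Nat.not_odd_iff_even.mp hodd
        have hko : Odd k := Int.not_even_iff_odd.mp hk
        have h4 : (4 : ℕ) ∣ m := by tauto
        obtain ⟨u, hu⟩ := hde
        have hd2 : (d : ℤ) = 2 * (u : ℤ) := by rw [hu]; push_cast; ring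
        have hCu : C = (u : ℤ) * ((d : ℤ) - 1) := by
          have : 2 * C = 2 * ((u : ℤ) * ((d : ℤ) - 1)) := by rw [hC2, hd2]; ring
          linarith
        have hmue : (m : ℤ) = 2 * ((u : ℤ) * (e : ℤ)) := by rw [hmℤ, hd2]; ring
        have h2ue : (2 : ℤ) ∣ ((u : ℤ) * (e : ℤ)) := by
          obtain ⟨t4, ht4⟩ := h4
          have hm4' : (m : ℤ) = 4 * (t4 : ℤ) := by exact_mod_cast ht4
          exact ⟨(t4 : ℤ), by linarith [hmue, hm4']⟩
        obtain ⟨v, hv⟩ := h2ue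
        obtain ⟨s, hs⟩ := hko
        have hm4 : (m : ℤ) = 4 * v := by rw [hmue, hv]; ring
        rw [hm4]
        have hCke : 1 + C * k * (e : ℤ) = (1 + 2 * v) + (4 * v) * (2 * (u : ℤ) * s + (u : ℤ) - s - 1) := by
          rw [hCu, hs, hd2]
          linear_combination ((2 * (u : ℤ) - 1) * (2 * s + 1)) * hv
        rw [hCke]
        exact (show IsCoprime (1 + 2 * v) (4 * v) from ⟨1 + 2 * v, -(1 + v), by ring⟩).add_mul_left_left _
  have hgd : g ∣ d := by
    have := Int.gcd_dvd_left (a := (d : ℤ)) (b := k)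
    exact_mod_cast this
  -- gcd computations
  have hSgcd : Int.gcd S (n : ℤ) = d := by
    rw [hSfact, hnℤ, Int.gcd_mul_left, hA, mul_one, Int.natAbs_natCast]
  have hTgcd : Int.gcd (-(k * (m : ℤ))) (n : ℤ) = m * g := by
    rw [aux_int_neg_gcd, hnℤ, mul_comm k (m : ℤ), mul_comm (d : ℤ) (m : ℤ),
      Int.gcd_mul_left, Int.natAbs_natCast, Int.gcd_comm]
  -- normalize T
  have hT' : T = AddMonoidHom.mulLeft (((-(k * (m : ℤ)) : ℤ) : ZMod n)) := by
    rw [hT]; congr 1; push_cast; ring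
  -- the product of the two multipliers vanishes
  have hzero : (((-(k * (m : ℤ)) : ℤ) : ZMod n)) * ((S : ℤ) : ZMod n) = 0 := by
    rw [← Int.cast_mul, ZMod.intCast_zmod_eq_zero_iff_dvd]
    exact ⟨-(k * (1 + C * k * (e : ℤ))), by rw [hSfact, hnℤ, hmℤ]; ring⟩
  have hNT : N.range ≤ T.ker := by
    rintro x ⟨y, rfl⟩
    rw [AddMonoidHom.mem_ker, hT', hN]
    simp only [AddMonoidHom.coe_mulLeft]
    rw [← mul_assoc, hzero, zero_mul]
  have hTN : T.range ≤ N.ker := by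
    rintro x ⟨y, rfl⟩
    rw [AddMonoidHom.mem_ker, hT', hN]
    simp only [AddMonoidHom.coe_mulLeft]
    rw [← mul_assoc, mul_comm (((S : ℤ) : ZMod n)) _, hzero, zero_mul]
  -- cards
  have cardTker : Nat.card T.ker = m * g := by
    rw [hT', aux_card_ker n hn0, hTgcd]
  have cardNrange : Nat.card N.range = m := by
    rw [hN, aux_card_range n hn0, hSgcd, hnm, Nat.mul_div_cancel_left _ hd]
  have cardNker : Nat.card N.ker = d := by
    rw [hN, aux_card_ker n hn0, hSgcd]
  have cardTrange : Nat.card T.range = d / g := by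
    rw [hT', aux_card_range n hn0, hTgcd, hnm, mul_comm m g, Nat.mul_div_mul_right _ _ hm]
  constructor
  · exact aux_quot_equiv hn0 hNT (by rw [cardTker, cardNrange])
  · exact aux_quot_equiv hn0 hTN (by rw [cardNker, cardTrange, Nat.div_mul_cancel hgd])
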